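/- Let k ≥ 2, y ∈ ℝⁿ with |y| < 1, and W the vector field from the Alexander–Osserman argument (W(x) = -(1/k)·(((1-2⟨x,y⟩+|y|²)/|x-y|²)^{k/2} - 1)·(x-y) + (1/(k-2))·(((1-2⟨x,y⟩+|y|²)/|x-y|²)^{(k-2)/2} - 1)·y for k > 2, with the logarithmic modification for k = 2). Then for every x in the open unit ball with x ≠ y and every orthonormal family e₁,…,e_k in ℝⁿ, one has the exact identity ∑_{i=1}^k ⟨D_{e_i}W(x), e_i⟩ = 1 - ((1-2⟨x,y⟩+|y|²)^{k/2}/|x-y|^{k+2})·(|x-y|² - ∑_{i=1}^k ⟨x-y, e_i⟩²) - ((1-2⟨x,y⟩+|y|²)^{(k-4)/2}/|x-y|^{k-2})·∑_{i=1}^k ⟨y, e_i⟩². -/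

import Mathlib

open scoped InnerProductSpace
open Real
set_option maxHeartbeats 2000000

private lemma aux_D (n k : ℕ) (y : EuclideanSpace ℝ (Fin n))
    (W : EuclideanSpace ℝ (Fin n) → EuclideanSpace ℝ (Fin n))
    (hWgt : 2 < k → ∀ x, W x =
      (-(1 / (k : ℝ)) * (((1 - 2 * ⟪x, y⟫_ℝ + ‖y‖ ^ 2) / ‖x - y‖ ^ 2) ^ ((k : ℝ) / 2) - 1)) • (x - y)
      + ((1 / ((k : ℝ) - 2)) * (((1 - 2 * ⟪x, y⟫_ℝ + ‖y‖ ^ 2) / ‖x - y‖ ^ 2) ^ (((k : ℝ) - 2) / 2) - 1)) • y)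
    (hWeq : k = 2 → ∀ x, W x =
      (-(1 / 2 : ℝ) * ((1 - 2 * ⟪x, y⟫_ℝ + ‖y‖ ^ 2) / ‖x - y‖ ^ 2 - 1)) • (x - y)
      + ((1 / 2 : ℝ) * Real.log ((1 - 2 * ⟪x, y⟫_ℝ + ‖y‖ ^ 2) / ‖x - y‖ ^ 2)) • y)
    (hk : 2 ≤ k) (x : EuclideanSpace ℝ (Fin n)) (hxy : x ≠ y)
    (hax : 0 < 1 - 2 * ⟪x, y⟫_ℝ + ‖y‖ ^ 2) :
    ∃ D : EuclideanSpace ℝ (Fin n) →L[ℝ] EuclideanSpace ℝ (Fin n),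
      HasFDerivAt W D x ∧ ∀ v w, ⟪D v, w⟫_ℝ =
        (-(1 / (k : ℝ)) * (((1 - 2 * ⟪x, y⟫_ℝ + ‖y‖ ^ 2) / ‖x - y‖ ^ 2) ^ ((k : ℝ) / 2) - 1)) * ⟪v, w⟫_ℝ
        + ((((1 - 2 * ⟪x, y⟫_ℝ + ‖y‖ ^ 2) / ‖x - y‖ ^ 2) ^ ((k : ℝ) / 2 - 1)) *
            ((1 - 2 * ⟪x, y⟫_ℝ + ‖y‖ ^ 2) * ⟪x - y, v⟫_ℝ / (‖x - y‖ ^ 2) ^ 2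
              + ⟪y, v⟫_ℝ / ‖x - y‖ ^ 2)) * ⟪x - y, w⟫_ℝ
        - ((((1 - 2 * ⟪x, y⟫_ℝ + ‖y‖ ^ 2) / ‖x - y‖ ^ 2) ^ ((k : ℝ) / 2 - 2)) *
            ((1 - 2 * ⟪x, y⟫_ℝ + ‖y‖ ^ 2) * ⟪x - y, v⟫_ℝ / (‖x - y‖ ^ 2) ^ 2
              + ⟪y, v⟫_ℝ / ‖x - y‖ ^ 2)) * ⟪y, w⟫_ℝ := by
  have hxy' : x - y ≠ 0 := sub_ne_zero.2 hxy
  have ht : (0:ℝ) < ‖x - y‖ := norm_pos_iff.2 hxy'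
  have hb : (0:ℝ) < ‖x - y‖ ^ 2 := pow_pos ht 2
  have hr : (0:ℝ) < (1 - 2 * ⟪x, y⟫_ℝ + ‖y‖ ^ 2) / ‖x - y‖ ^ 2 := div_pos hax hb
  -- derivative of the quotient
  have h1 : HasFDerivAt (fun z : EuclideanSpace ℝ (Fin n) => ⟪z, y⟫_ℝ) (innerSL ℝ y) x := by
    have h : (fun z : EuclideanSpace ℝ (Fin n) => ⟪z, y⟫_ℝ) = fun z => (innerSL ℝ y) z := by
      funext z; rw [innerSL_apply_apply, real_inner_comm]
    rw [h]; exact (innerSL ℝ y).hasFDerivAt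
  have hA : HasFDerivAt (fun z : EuclideanSpace ℝ (Fin n) => 1 - 2 * ⟪z, y⟫_ℝ + ‖y‖ ^ 2)
      (-((2:ℝ) • innerSL ℝ y)) x := ((h1.const_mul 2).const_sub 1).add_const (‖y‖ ^ 2)
  have hB : HasFDerivAt (fun z : EuclideanSpace ℝ (Fin n) => ‖z - y‖ ^ 2)
      (2 • (innerSL ℝ (x - y)).comp (ContinuousLinearMap.id ℝ _)) x := by
    have := ((hasFDerivAt_id x).sub_const y).norm_sq
    simpa using this
  have hBinv : HasFDerivAt (fun z : EuclideanSpace ℝ (Fin n) => (‖z - y‖ ^ 2)⁻¹)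
      ((-((‖x - y‖ ^ 2) ^ 2)⁻¹) • (2 • (innerSL ℝ (x - y)).comp (ContinuousLinearMap.id ℝ _))) x :=
    (hasDerivAt_inv hb.ne').comp_hasFDerivAt x hB
  obtain ⟨R, hR, hRv⟩ : ∃ R : EuclideanSpace ℝ (Fin n) →L[ℝ] ℝ,
      HasFDerivAt (fun z : EuclideanSpace ℝ (Fin n) =>
          (1 - 2 * ⟪z, y⟫_ℝ + ‖y‖ ^ 2) / ‖z - y‖ ^ 2) R x ∧
      ∀ v, R v = -2 * (1 - 2 * ⟪x, y⟫_ℝ + ‖y‖ ^ 2) * ⟪x - y, v⟫_ℝ / (‖x - y‖ ^ 2) ^ 2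
        - 2 * ⟪y, v⟫_ℝ / ‖x - y‖ ^ 2 := by
    refine ⟨(1 - 2 * ⟪x, y⟫_ℝ + ‖y‖ ^ 2) •
        ((-((‖x - y‖ ^ 2) ^ 2)⁻¹) • (2 • (innerSL ℝ (x - y)).comp (ContinuousLinearMap.id ℝ _)))
        + ((‖x - y‖ ^ 2)⁻¹) • (-((2:ℝ) • innerSL ℝ y)), ?_, ?_⟩
    · have := hA.mul hBinv
      exact this.congr_of_eventuallyEq (Filter.Eventually.of_forall fun z => div_eq_mul_inv _ _)
    · intro v
      simp only [ContinuousLinearMap.add_apply, ContinuousLinearMap.coe_smul', Pi.smul_apply,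
        ContinuousLinearMap.smul_apply, ContinuousLinearMap.comp_apply,
        ContinuousLinearMap.id_apply, ContinuousLinearMap.neg_apply, innerSL_apply_apply, smul_eq_mul,
        nsmul_eq_mul, Nat.cast_ofNat]
      field_simp
      ring
  rcases lt_or_eq_of_le hk with hk2 | hk2
  · -- 2 < k
    have hk0 : (k:ℝ) ≠ 0 := by positivity
    have hk2' : (k:ℝ) - 2 ≠ 0 := by
      have : (2:ℝ) < (k:ℝ) := by exact_mod_cast hk2
      linarith
    have hWf : W = fun z => (-(1 / (k : ℝ)) *
        (((1 - 2 * ⟪z, y⟫_ℝ + ‖y‖ ^ 2) / ‖z - y‖ ^ 2) ^ ((k : ℝ) / 2) - 1)) • (z - y)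
        + ((1 / ((k : ℝ) - 2)) *
          (((1 - 2 * ⟪z, y⟫_ℝ + ‖y‖ ^ 2) / ‖z - y‖ ^ 2) ^ (((k : ℝ) - 2) / 2) - 1)) • y :=
      funext (hWgt hk2)
    rw [hWf]
    have hF : HasDerivAt (fun s : ℝ => -(1 / (k : ℝ)) * (s ^ ((k : ℝ) / 2) - 1))
        (-(1/2) * ((1 - 2 * ⟪x, y⟫_ℝ + ‖y‖ ^ 2) / ‖x - y‖ ^ 2) ^ ((k : ℝ) / 2 - 1))
        ((1 - 2 * ⟪x, y⟫_ℝ + ‖y‖ ^ 2) / ‖x - y‖ ^ 2) := by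
      have := HasDerivAt.const_mul (-(1 / (k : ℝ)))
        ((Real.hasDerivAt_rpow_const (x := (1 - 2 * ⟪x, y⟫_ℝ + ‖y‖ ^ 2) / ‖x - y‖ ^ 2)
          (p := (k : ℝ) / 2) (Or.inl hr.ne')).sub_const 1)
      refine this.congr_deriv ?_
      field_simp
      try ring
    have hG : HasDerivAt (fun s : ℝ => (1 / ((k : ℝ) - 2)) * (s ^ (((k : ℝ) - 2) / 2) - 1))
        ((1/2) * ((1 - 2 * ⟪x, y⟫_ℝ + ‖y‖ ^ 2) / ‖x - y‖ ^ 2) ^ ((k : ℝ) / 2 - 2))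
        ((1 - 2 * ⟪x, y⟫_ℝ + ‖y‖ ^ 2) / ‖x - y‖ ^ 2) := by
      have := HasDerivAt.const_mul (1 / ((k : ℝ) - 2))
        ((Real.hasDerivAt_rpow_const (x := (1 - 2 * ⟪x, y⟫_ℝ + ‖y‖ ^ 2) / ‖x - y‖ ^ 2)
          (p := ((k : ℝ) - 2) / 2) (Or.inl hr.ne')).sub_const 1)
      refine this.congr_deriv ?_
      rw [show ((k:ℝ) - 2) / 2 - 1 = (k:ℝ)/2 - 2 by ring]
      field_simp
      try ring
    have hf := hF.comp_hasFDerivAt x hR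
    have hg := hG.comp_hasFDerivAt x hR
    have hD0 := (hf.smul ((hasFDerivAt_id x).sub_const y)).add (hg.smul (hasFDerivAt_const y x))
    refine ⟨_, hD0, ?_⟩
    intro v w
    simp only [ContinuousLinearMap.add_apply, ContinuousLinearMap.smulRight_apply,
      ContinuousLinearMap.smul_apply, ContinuousLinearMap.id_apply,
      ContinuousLinearMap.zero_apply, smul_eq_mul, smul_zero, zero_add, add_zero, hRv,
      Function.comp_apply, id_eq, inner_add_left, real_inner_smul_left, inner_zero_left]
    ring
  · -- k = 2
    subst hk2
    have hWf : W = fun z => (-(1 / 2 : ℝ) *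
        ((1 - 2 * ⟪z, y⟫_ℝ + ‖y‖ ^ 2) / ‖z - y‖ ^ 2 - 1)) • (z - y)
        + ((1 / 2 : ℝ) * Real.log ((1 - 2 * ⟪z, y⟫_ℝ + ‖y‖ ^ 2) / ‖z - y‖ ^ 2)) • y :=
      funext (hWeq rfl)
    rw [hWf]
    have hF : HasDerivAt (fun s : ℝ => -(1 / 2 : ℝ) * (s - 1))
        (-(1/2) * ((1 - 2 * ⟪x, y⟫_ℝ + ‖y‖ ^ 2) / ‖x - y‖ ^ 2) ^ (((2:ℕ) : ℝ) / 2 - 1))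
        ((1 - 2 * ⟪x, y⟫_ℝ + ‖y‖ ^ 2) / ‖x - y‖ ^ 2) := by
      have := HasDerivAt.const_mul (-(1/2 : ℝ))
        ((hasDerivAt_id ((1 - 2 * ⟪x, y⟫_ℝ + ‖y‖ ^ 2) / ‖x - y‖ ^ 2)).sub_const 1)
      refine this.congr_deriv ?_
      rw [show ((2:ℕ) : ℝ) / 2 - 1 = 0 by norm_num, Real.rpow_zero]
      try ring
    have hG : HasDerivAt (fun s : ℝ => (1 / 2 : ℝ) * Real.log s)
        ((1/2) * ((1 - 2 * ⟪x, y⟫_ℝ + ‖y‖ ^ 2) / ‖x - y‖ ^ 2) ^ (((2:ℕ) : ℝ) / 2 - 2))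
        ((1 - 2 * ⟪x, y⟫_ℝ + ‖y‖ ^ 2) / ‖x - y‖ ^ 2) := by
      have := HasDerivAt.const_mul (1/2 : ℝ) (Real.hasDerivAt_log hr.ne')
      refine this.congr_deriv ?_
      rw [show ((2:ℕ) : ℝ) / 2 - 2 = (-1 : ℝ) by norm_num, Real.rpow_neg_one]
    have hf := hF.comp_hasFDerivAt x hR
    have hg := hG.comp_hasFDerivAt x hR
    have hD0 := (hf.smul ((hasFDerivAt_id x).sub_const y)).add (hg.smul (hasFDerivAt_const y x))
    refine ⟨_, hD0, ?_⟩
    intro v w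
    simp only [ContinuousLinearMap.add_apply, ContinuousLinearMap.smulRight_apply,
      ContinuousLinearMap.smul_apply, ContinuousLinearMap.id_apply,
      ContinuousLinearMap.zero_apply, smul_eq_mul, smul_zero, zero_add, add_zero, hRv,
      Function.comp_apply, id_eq, inner_add_left, real_inner_smul_left, inner_zero_left]
    rw [show (((2:ℕ)) : ℝ) / 2 = 1 by norm_num, Real.rpow_one]
    norm_num
    try ring

theorem stmt_5 (n k : ℕ) (hk : 2 ≤ k) (y : EuclideanSpace ℝ (Fin n)) (hy : ‖y‖ < 1)
    (W : EuclideanSpace ℝ (Fin n) → EuclideanSpace ℝ (Fin n))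
    (hWgt : 2 < k → ∀ x, W x =
      (-(1 / (k : ℝ)) * (((1 - 2 * ⟪x, y⟫_ℝ + ‖y‖ ^ 2) / ‖x - y‖ ^ 2) ^ ((k : ℝ) / 2) - 1)) • (x - y)
      + ((1 / ((k : ℝ) - 2)) * (((1 - 2 * ⟪x, y⟫_ℝ + ‖y‖ ^ 2) / ‖x - y‖ ^ 2) ^ (((k : ℝ) - 2) / 2) - 1)) • y)
    (hWeq : k = 2 → ∀ x, W x =
      (-(1 / 2 : ℝ) * ((1 - 2 * ⟪x, y⟫_ℝ + ‖y‖ ^ 2) / ‖x - y‖ ^ 2 - 1)) • (x - y)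
      + ((1 / 2 : ℝ) * Real.log ((1 - 2 * ⟪x, y⟫_ℝ + ‖y‖ ^ 2) / ‖x - y‖ ^ 2)) • y)
    (x : EuclideanSpace ℝ (Fin n)) (hx : ‖x‖ < 1) (hxy : x ≠ y)
    (e : Fin k → EuclideanSpace ℝ (Fin n)) (he : Orthonormal ℝ e) :
    ∑ i, ⟪fderiv ℝ W x (e i), e i⟫_ℝ =
      1 - ((1 - 2 * ⟪x, y⟫_ℝ + ‖y‖ ^ 2) ^ ((k : ℝ) / 2) / ‖x - y‖ ^ ((k : ℝ) + 2)) *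
            (‖x - y‖ ^ 2 - ∑ i, ⟪x - y, e i⟫_ℝ ^ 2)
        - ((1 - 2 * ⟪x, y⟫_ℝ + ‖y‖ ^ 2) ^ (((k : ℝ) - 4) / 2) / ‖x - y‖ ^ ((k : ℝ) - 2)) *
            ∑ i, ⟪y, e i⟫_ℝ ^ 2 := by
  have hxy' : x - y ≠ 0 := sub_ne_zero.2 hxy
  have ht : (0:ℝ) < ‖x - y‖ := norm_pos_iff.2 hxy'
  have hb : (0:ℝ) < ‖x - y‖ ^ 2 := pow_pos ht 2
  have hns : ‖x - y‖ ^ 2 = ‖x‖ ^ 2 - 2 * ⟪x, y⟫_ℝ + ‖y‖ ^ 2 := norm_sub_sq_real x y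
  have hax : 0 < 1 - 2 * ⟪x, y⟫_ℝ + ‖y‖ ^ 2 := by nlinarith [norm_nonneg x]
  have hk0 : (k:ℝ) ≠ 0 := Nat.cast_ne_zero.2 (by omega)
  obtain ⟨D, hD, hDv⟩ := aux_D n k y W hWgt hWeq hk x hxy hax
  have hone : ∀ i, ⟪e i, e i⟫_ℝ = (1:ℝ) := fun i => by
    rw [real_inner_self_eq_norm_sq, he.1 i, one_pow]
  have hpow1 : ((1 - 2 * ⟪x, y⟫_ℝ + ‖y‖ ^ 2) / ‖x - y‖ ^ 2) ^ ((k:ℝ)/2 - 1) = ((1 - 2 * ⟪x, y⟫_ℝ + ‖y‖ ^ 2) / ‖x - y‖ ^ 2) ^ ((k:ℝ)/2 - 2) * ((1 - 2 * ⟪x, y⟫_ℝ + ‖y‖ ^ 2) / ‖x - y‖ ^ 2) := by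
    rw [← Real.rpow_add_one (div_pos hax hb).ne']
    congr 1
    ring
  have step1 : ∀ i, ⟪fderiv ℝ W x (e i), e i⟫_ℝ =
      (-(1 / (k : ℝ)) * (((1 - 2 * ⟪x, y⟫_ℝ + ‖y‖ ^ 2) / ‖x - y‖ ^ 2) ^ ((k:ℝ)/2) - 1))
      + (((1 - 2 * ⟪x, y⟫_ℝ + ‖y‖ ^ 2) / ‖x - y‖ ^ 2) ^ ((k:ℝ)/2 - 2) * (1 - 2 * ⟪x, y⟫_ℝ + ‖y‖ ^ 2) ^ 2 / (‖x - y‖ ^ 2) ^ 3) * ⟪x - y, e i⟫_ℝ ^ 2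
      - (((1 - 2 * ⟪x, y⟫_ℝ + ‖y‖ ^ 2) / ‖x - y‖ ^ 2) ^ ((k:ℝ)/2 - 2) / ‖x - y‖ ^ 2) * ⟪y, e i⟫_ℝ ^ 2 := by
    intro i
    rw [hD.fderiv, hDv (e i) (e i), hone i, hpow1]
    ring
  simp only [step1]
  rw [Finset.sum_sub_distrib, Finset.sum_add_distrib, Finset.sum_const, ← Finset.mul_sum,
    ← Finset.mul_sum, Finset.card_univ, Fintype.card_fin, nsmul_eq_mul]
  have hb2 : (‖x - y‖ ^ 2 : ℝ) = ‖x - y‖ ^ ((2:ℝ)) := by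
    rw [← Real.rpow_natCast ‖x - y‖ 2]; norm_num
  have hAB : ∀ c : ℝ, ((1 - 2 * ⟪x, y⟫_ℝ + ‖y‖ ^ 2) / ‖x - y‖ ^ 2) ^ c = (1 - 2 * ⟪x, y⟫_ℝ + ‖y‖ ^ 2) ^ c / ‖x - y‖ ^ (2 * c) := by
    intro c
    rw [Real.div_rpow hax.le hb.le]
    congr 1
    rw [hb2, ← Real.rpow_mul ht.le]
  have hC1 : ((1 - 2 * ⟪x, y⟫_ℝ + ‖y‖ ^ 2) / ‖x - y‖ ^ 2) ^ ((k:ℝ)/2 - 2) * (1 - 2 * ⟪x, y⟫_ℝ + ‖y‖ ^ 2) ^ 2 / (‖x - y‖ ^ 2) ^ 3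
      = (1 - 2 * ⟪x, y⟫_ℝ + ‖y‖ ^ 2) ^ ((k:ℝ)/2) / ‖x - y‖ ^ ((k:ℝ) + 2) := by
    rw [hAB]
    rw [show ((1 - 2 * ⟪x, y⟫_ℝ + ‖y‖ ^ 2) : ℝ) ^ 2 = (1 - 2 * ⟪x, y⟫_ℝ + ‖y‖ ^ 2) ^ ((2:ℝ)) from by rw [← Real.rpow_natCast (1 - 2 * ⟪x, y⟫_ℝ + ‖y‖ ^ 2) 2]; norm_num]
    rw [show ((‖x - y‖ ^ 2 : ℝ)) ^ 3 = ‖x - y‖ ^ ((6:ℝ)) from by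
      rw [← pow_mul, ← Real.rpow_natCast ‖x - y‖ 6]; norm_num]
    rw [div_mul_eq_mul_div, div_div, ← Real.rpow_add hax, ← Real.rpow_add ht]
    rw [show (k:ℝ)/2 - 2 + 2 = (k:ℝ)/2 by ring, show 2*((k:ℝ)/2 - 2) + 6 = (k:ℝ) + 2 by ring]
  have hC2 : ((1 - 2 * ⟪x, y⟫_ℝ + ‖y‖ ^ 2) / ‖x - y‖ ^ 2) ^ ((k:ℝ)/2 - 2) / ‖x - y‖ ^ 2
      = (1 - 2 * ⟪x, y⟫_ℝ + ‖y‖ ^ 2) ^ (((k:ℝ) - 4)/2) / ‖x - y‖ ^ ((k:ℝ) - 2) := by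
    rw [hAB, hb2, div_div, ← Real.rpow_add ht]
    rw [show 2*((k:ℝ)/2 - 2) + 2 = (k:ℝ) - 2 by ring, show (k:ℝ)/2 - 2 = ((k:ℝ) - 4)/2 by ring]
  have hXu : ((1 - 2 * ⟪x, y⟫_ℝ + ‖y‖ ^ 2) / ‖x - y‖ ^ 2) ^ ((k:ℝ)/2)
      = (1 - 2 * ⟪x, y⟫_ℝ + ‖y‖ ^ 2) ^ ((k:ℝ)/2) / ‖x - y‖ ^ ((k:ℝ) + 2) * ‖x - y‖ ^ 2 := by
    rw [hAB, hb2, show (2:ℝ)*((k:ℝ)/2) = (k:ℝ) by ring, Real.rpow_add ht (k:ℝ) 2]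
    have h1 : ‖x - y‖ ^ ((k:ℝ)) ≠ 0 := (Real.rpow_pos_of_pos ht _).ne'
    have h2 : ‖x - y‖ ^ ((2:ℝ)) ≠ 0 := (Real.rpow_pos_of_pos ht _).ne'
    field_simp
  rw [hC1, hC2, hXu]
  field_simp
  ring
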